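/- For complex s with 0 < Re(s) < 1/2, the Mellin transform identity holds: (1/Γ(s)) ∫₀^∞ e^{-2t} I₀(2t) t^{s-1} dt = 4^{-s} π^{-1/2} Γ(1/2 - s) / Γ(1 - s), where I₀ is the modified Bessel function of the first kind of order 0. -/

import Mathlib

open Real Complex MeasureTheory Set

/-- Modified Bessel function of the first kind of order 0. -/
noncomputable def besselI0 (x : ℝ) : ℝ := ∑' m : ℕ, (x / 2) ^ (2 * m) / (Nat.factorial m) ^ 2

section Aux

lemma cosPow_step (n : ℕ) : ∫ x in (0:ℝ)..π, Real.cos x ^ (n+2)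
    = (n+1)/(n+2) * ∫ x in (0:ℝ)..π, Real.cos x ^ n := by
  rw [integral_cos_pow]; simp

lemma cosPow_odd (m : ℕ) : ∫ x in (0:ℝ)..π, Real.cos x ^ (2*m+1) = 0 := by
  induction m with
  | zero => simp
  | succ m ih =>
      have : 2*(m+1)+1 = (2*m+1)+2 := by ring
      rw [this, cosPow_step, ih, mul_zero]

lemma cosPow_even (m : ℕ) : ∫ x in (0:ℝ)..π, Real.cos x ^ (2*m)
    = π * (2*m).factorial / (4^m * (m.factorial)^2) := by
  induction m with
  | zero => simp
  | succ m ih =>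
      have h3 : 2*(m+1) = 2*m+2 := by ring
      rw [h3, cosPow_step, ih]
      have h1 : ((m+1).factorial : ℝ) = (m+1) * m.factorial := by
        rw [Nat.factorial_succ]; push_cast; ring
      have h2 : ((2*m+2).factorial : ℝ) = (2*m+2) * ((2*m+1) * (2*m).factorial) := by
        have : 2*m+2 = (2*m+1)+1 := by ring
        rw [this, Nat.factorial_succ, Nat.factorial_succ]; push_cast; ring
      rw [h2, h1]
      have hf : (m.factorial : ℝ) ≠ 0 := Nat.cast_ne_zero.mpr m.factorial_ne_zero
      have h4 : (4:ℝ)^m ≠ 0 := by positivity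
      push_cast
      field_simp
      ring

lemma besselI0_eq_integral (x : ℝ) :
    besselI0 x = (1/π) * ∫ θ in (0:ℝ)..π, Real.exp (x * Real.cos θ) := by
  have hser : ∀ θ : ℝ, Real.exp (x * Real.cos θ) = ∑' n : ℕ, (x * Real.cos θ)^n / n.factorial := by
    intro θ; rw [Real.exp_eq_exp_ℝ, NormedSpace.exp_eq_tsum_div]
  have hIoc : ∀ g : ℝ → ℝ, (∫ θ in (0:ℝ)..π, g θ) = ∫ θ in Ioc (0:ℝ) π, g θ := fun g =>
    intervalIntegral.integral_of_le pi_pos.le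
  rw [hIoc]
  simp_rw [hser]
  have hswap : (∫ θ in Ioc (0:ℝ) π, ∑' n : ℕ, (x * Real.cos θ)^n / n.factorial)
      = ∑' n : ℕ, ∫ θ in Ioc (0:ℝ) π, (x * Real.cos θ)^n / n.factorial := by
    refine (MeasureTheory.integral_tsum_of_summable_integral_norm (fun n => ?_) ?_).symm
    · apply Continuous.integrableOn_Ioc; fun_prop
    · apply Summable.of_nonneg_of_le (fun n => by positivity)
        (fun n => ?_) ((Real.summable_pow_div_factorial |x|).mul_left π)
      have hb : ∀ θ ∈ Ioc (0:ℝ) π, ‖(x * Real.cos θ)^n / n.factorial‖ ≤ |x|^n / n.factorial := by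
        intro θ _
        have h1 : |x * Real.cos θ| ≤ |x| := by
          rw [abs_mul]
          exact mul_le_of_le_one_right (abs_nonneg x) (Real.abs_cos_le_one θ)
        have h2 : ‖(x * Real.cos θ)^n / n.factorial‖ = |x * Real.cos θ|^n / n.factorial := by
          rw [norm_div, norm_pow, Real.norm_eq_abs, Real.norm_natCast]
        rw [h2]
        gcongr
      calc ∫ θ in Ioc (0:ℝ) π, ‖(x * Real.cos θ)^n / n.factorial‖
          ≤ ∫ _ in Ioc (0:ℝ) π, |x|^n / n.factorial := by
            refine setIntegral_mono_on ?_ ?_ measurableSet_Ioc hb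
            · apply Continuous.integrableOn_Ioc; fun_prop
            · exact integrableOn_const measure_Ioc_lt_top.ne
        _ = π * (|x|^n / n.factorial) := by
            rw [setIntegral_const, Real.volume_real_Ioc_of_le pi_pos.le, smul_eq_mul, sub_zero]
  rw [hswap]
  have hterm : ∀ n : ℕ, (∫ θ in Ioc (0:ℝ) π, (x * Real.cos θ)^n / n.factorial)
      = x^n / n.factorial * ∫ θ in (0:ℝ)..π, Real.cos θ ^ n := by
    intro n
    rw [← hIoc, ← intervalIntegral.integral_const_mul]
    congr 1 with θ
    ring
  simp_rw [hterm]
  have key : (∑' n : ℕ, x^n / n.factorial * ∫ θ in (0:ℝ)..π, Real.cos θ ^ n)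
      = ∑' m : ℕ, π * ((x/2)^(2*m) / (m.factorial)^2) := by
    refine tsum_eq_tsum_of_ne_zero_bij (fun m => 2 * (m : ℕ)) ?_ ?_ ?_
    · intro a b hab
      have : (a : ℕ) = b := by simpa using hab
      exact Subtype.ext this
    · intro n hn
      rw [Function.mem_support] at hn
      obtain ⟨m, rfl | rfl⟩ := Nat.even_or_odd' n
      · have hx : x ^ (2*m) ≠ 0 := by
          intro h
          apply hn
          rw [h, zero_div, zero_mul]
        refine ⟨⟨m, ?_⟩, rfl⟩
        rw [Function.mem_support]
        have hx2 : ((x/2) : ℝ) ^ (2*m) ≠ 0 := by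
          rw [div_pow]
          exact div_ne_zero hx (by positivity)
        have hf : ((m.factorial : ℝ))^2 ≠ 0 := by positivity
        positivity
      · exact absurd (by rw [cosPow_odd, mul_zero]) hn
    · rintro ⟨m, hm⟩
      rw [cosPow_even]
      have hf : (m.factorial : ℝ) ≠ 0 := Nat.cast_ne_zero.mpr m.factorial_ne_zero
      have h2f : ((2*m).factorial : ℝ) ≠ 0 := Nat.cast_ne_zero.mpr (2*m).factorial_ne_zero
      have h4 : (4:ℝ)^m ≠ 0 := by positivity
      have hx : (x/2)^(2*m) = x^(2*m) / 4^m := by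
        rw [div_pow]
        congr 1
        rw [pow_mul]
        norm_num
      rw [hx]
      field_simp
  rw [key, tsum_mul_left, besselI0]
  field_simp

lemma image_sinsq : (fun θ : ℝ => Real.sin (θ/2)^2) '' Ioo 0 π = Ioo 0 1 := by
  ext x
  constructor
  · rintro ⟨θ, ⟨h1, h2⟩, rfl⟩
    have hu1 : 0 < θ/2 := by linarith
    have hu2 : θ/2 < π/2 := by linarith
    have hs : 0 < Real.sin (θ/2) := Real.sin_pos_of_pos_of_lt_pi hu1 (by linarith [Real.pi_pos])
    have hs1 : Real.sin (θ/2) < 1 := by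
      calc Real.sin (θ/2) < Real.sin (π/2) := by
            apply Real.strictMonoOn_sin ⟨by linarith, hu2.le⟩ ⟨by linarith [Real.pi_pos], le_refl _⟩ hu2
        _ = 1 := Real.sin_pi_div_two
    constructor
    · positivity
    · nlinarith
  · rintro ⟨hx0, hx1⟩
    have hsx0 : 0 < Real.sqrt x := Real.sqrt_pos.mpr hx0
    have hsx1 : Real.sqrt x < 1 := by
      rw [show (1:ℝ) = Real.sqrt 1 by simp]
      exact Real.sqrt_lt_sqrt hx0.le hx1
    have ha0 : 0 < Real.arcsin (Real.sqrt x) := Real.arcsin_pos.mpr hsx0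
    have ha1 : Real.arcsin (Real.sqrt x) < π/2 := Real.arcsin_lt_pi_div_two.mpr hsx1
    refine ⟨2 * Real.arcsin (Real.sqrt x), ⟨by linarith, by linarith⟩, ?_⟩
    show Real.sin (2 * Real.arcsin (Real.sqrt x) / 2) ^ 2 = x
    rw [show 2 * Real.arcsin (Real.sqrt x) / 2 = Real.arcsin (Real.sqrt x) by ring,
      Real.sin_arcsin (by linarith) hsx1.le, Real.sq_sqrt hx0.le]

lemma subst_lemma (s : ℂ) :
    ∫ θ in Ioo (0:ℝ) π, ((2 - 2*Real.cos θ : ℝ) : ℂ)^(-s)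
      = (4:ℂ)^(-s) * Complex.betaIntegral (1/2 - s) (1/2) := by
  set g : ℝ → ℂ := fun x => ((4*x : ℝ) : ℂ)^(-s) * ((Real.sqrt (x*(1-x)) : ℝ) : ℂ)⁻¹ with hg
  have hderiv : ∀ θ ∈ Ioo (0:ℝ) π, HasDerivWithinAt (fun θ : ℝ => Real.sin (θ/2)^2)
      (Real.sin (θ/2) * Real.cos (θ/2)) (Ioo 0 π) θ := by
    intro θ _
    have : HasDerivAt (fun θ : ℝ => Real.sin (θ/2)^2) (Real.sin (θ/2) * Real.cos (θ/2)) θ := by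
      have h1 : HasDerivAt (fun θ : ℝ => θ/2) (1/2) θ := (hasDerivAt_id θ).div_const 2
      have h2 := ((Real.hasDerivAt_sin (θ/2)).comp θ h1).fun_pow 2
      refine h2.congr_deriv ?_
      simp only [Function.comp_apply, pow_one]
      ring_nf
    exact this.hasDerivWithinAt
  have hinj : InjOn (fun θ : ℝ => Real.sin (θ/2)^2) (Ioo 0 π) := by
    intro a ha b hb hab
    have hab' : Real.sin (a/2)^2 = Real.sin (b/2)^2 := hab
    have key : ∀ c, c ∈ Ioo (0:ℝ) π → Real.sin (c/2) = Real.sqrt (Real.sin (c/2)^2) := by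
      intro c hc
      rw [Real.sqrt_sq (Real.sin_nonneg_of_nonneg_of_le_pi (by linarith [hc.1]) (by linarith [hc.2, Real.pi_pos]))]
    have h2 : Real.sin (a/2) = Real.sin (b/2) := by
      rw [key a ha, key b hb, hab']
    have := Real.injOn_sin
      (⟨by linarith [ha.1, Real.pi_pos], by linarith [ha.2]⟩ : a/2 ∈ Icc (-(π/2)) (π/2))
      (⟨by linarith [hb.1, Real.pi_pos], by linarith [hb.2]⟩ : b/2 ∈ Icc (-(π/2)) (π/2)) h2
    linarith
  have key := MeasureTheory.integral_image_eq_integral_abs_deriv_smul measurableSet_Ioo hderiv hinj g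
  rw [image_sinsq] at key
  have hptR : ∀ θ ∈ Ioo (0:ℝ) π,
      |Real.sin (θ/2) * Real.cos (θ/2)| • g (Real.sin (θ/2)^2) = ((2 - 2*Real.cos θ : ℝ) : ℂ)^(-s) := by
    intro θ ⟨h1, h2⟩
    have hs : 0 < Real.sin (θ/2) := Real.sin_pos_of_pos_of_lt_pi (by linarith) (by linarith [Real.pi_pos])
    have hc : 0 < Real.cos (θ/2) := Real.cos_pos_of_mem_Ioo ⟨by linarith [Real.pi_pos], by linarith⟩
    have habs : |Real.sin (θ/2) * Real.cos (θ/2)| = Real.sin (θ/2) * Real.cos (θ/2) :=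
      abs_of_pos (by positivity)
    have hsq : Real.sin (θ/2)^2 * (1 - Real.sin (θ/2)^2) = (Real.sin (θ/2) * Real.cos (θ/2))^2 := by
      have := Real.sin_sq_add_cos_sq (θ/2)
      nlinarith
    have hsqrt : Real.sqrt (Real.sin (θ/2)^2 * (1 - Real.sin (θ/2)^2)) = Real.sin (θ/2) * Real.cos (θ/2) := by
      rw [hsq, Real.sqrt_sq (by positivity)]
    have hcos : 4 * Real.sin (θ/2)^2 = 2 - 2*Real.cos θ := by
      have h := Real.sin_sq_eq_half_sub (θ/2)
      rw [show 2*(θ/2) = θ by ring] at h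
      nlinarith
    rw [hg]
    simp only [hsqrt, hcos, habs]
    rw [Complex.real_smul]
    push_cast
    rw [mul_comm, mul_assoc, inv_mul_cancel₀, mul_one]
    rw [← Complex.ofReal_ofNat 2, ← Complex.ofReal_div, ← Complex.ofReal_sin, ← Complex.ofReal_cos,
      ← Complex.ofReal_mul]
    exact Complex.ofReal_ne_zero.mpr (by positivity)
  rw [MeasureTheory.setIntegral_congr_fun measurableSet_Ioo hptR] at key
  rw [← key]
  have hptL : ∀ x ∈ Ioo (0:ℝ) 1,
      g x = (4:ℂ)^(-s) * ((x:ℂ)^((1/2 - s) - 1) * ((1:ℂ) - x)^((1/2 : ℂ) - 1)) := by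
    intro x ⟨hx0, hx1⟩
    show ((4*x : ℝ) : ℂ)^(-s) * ((Real.sqrt (x*(1-x)) : ℝ) : ℂ)⁻¹ = _
    have h4x : ((4*x : ℝ) : ℂ) = ((4:ℝ):ℂ) * ((x:ℝ):ℂ) := by push_cast; ring
    rw [h4x, Complex.mul_cpow_ofReal_nonneg (by norm_num) hx0.le]
    have hsqrt : Real.sqrt (x*(1-x)) = Real.sqrt x * Real.sqrt (1-x) := Real.sqrt_mul hx0.le _
    have hhalf : ∀ y : ℝ, 0 < y → ((Real.sqrt y : ℝ) : ℂ)⁻¹ = (y:ℂ)^(-(1/2) : ℂ) := by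
      intro y hy
      rw [Real.sqrt_eq_rpow, Complex.ofReal_cpow hy.le, Complex.cpow_neg]
      norm_num
    rw [hsqrt]
    push_cast
    rw [mul_inv]
    rw [hhalf x hx0, hhalf (1-x) (by linarith)]
    have hxne : (x:ℂ) ≠ 0 := Complex.ofReal_ne_zero.mpr hx0.ne'
    have hx12 : (x:ℂ)^((1/2 : ℂ) - s - 1) = (x:ℂ)^(-(1/2) : ℂ) * (x:ℂ)^(-s) := by
      rw [← Complex.cpow_add _ _ hxne]
      congr 1
      ring
    have h1x : ((1-x:ℝ):ℂ) = 1 - (x:ℂ) := by push_cast; ring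
    rw [h1x, show (1/2 : ℂ) - 1 = -(1/2) by norm_num, hx12]
    ring
  rw [MeasureTheory.setIntegral_congr_fun measurableSet_Ioo hptL, MeasureTheory.integral_const_mul]
  congr 1
  rw [Complex.betaIntegral, intervalIntegral.integral_of_le zero_le_one,
    MeasureTheory.integral_Ioc_eq_integral_Ioo]

end Aux

set_option maxHeartbeats 1000000 in
theorem zetaZ_integral_formula (s : ℂ) (h0 : 0 < s.re) (h1 : s.re < 1 / 2) :
    (1 / Complex.Gamma s) *
        ∫ t in Set.Ioi (0 : ℝ),
          (Real.exp (-2 * t) * besselI0 (2 * t) : ℂ) * (t : ℂ) ^ (s - 1) =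
      (4 : ℂ) ^ (-s) * ((Real.sqrt Real.pi : ℂ))⁻¹ *
        Complex.Gamma (1 / 2 - s) / Complex.Gamma (1 - s) := by
  have hπ := Real.pi_pos
  set F : ℝ → ℝ → ℂ := fun θ t =>
    ((Real.exp (-((2 - 2*Real.cos θ) * t)) : ℝ) : ℂ) * (t:ℂ)^(s-1) with hF
  have hcpos : ∀ θ ∈ Ioo (0:ℝ) π, 0 < 2 - 2*Real.cos θ := by
    intro θ hθ
    have h := Real.strictAntiOn_cos ⟨le_refl 0, hπ.le⟩ ⟨hθ.1.le, hθ.2.le⟩ hθ.1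
    rw [Real.cos_zero] at h
    linarith
  -- integrability in t for fixed c > 0
  have hInt_t : ∀ c : ℝ, 0 < c →
      IntegrableOn (fun t : ℝ => ((Real.exp (-(c*t)) : ℝ):ℂ) * (t:ℂ)^(s-1)) (Ioi 0) := by
    intro c hc
    have h1 := Complex.GammaIntegral_convergent h0
    have h2 : IntegrableOn
        (fun t : ℝ => ((Real.exp (-(c*t)) : ℝ):ℂ) * ((c*t : ℝ):ℂ)^(s-1)) (Ioi 0) := by
      have := (integrableOn_Ioi_comp_mul_left_iff
          (fun x : ℝ => ((Real.exp (-x) : ℝ):ℂ) * ((x : ℝ):ℂ)^(s-1)) 0 hc).mpr (by simpa using h1)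
      simpa using this
    have hcne : ((c:ℝ):ℂ)^(s-1) ≠ 0 := by
      rw [Ne, Complex.cpow_eq_zero_iff]
      push_neg
      intro h
      exact absurd h (Complex.ofReal_ne_zero.mpr hc.ne')
    have h3 : IntegrableOn
        (fun t : ℝ => (((c:ℝ):ℂ)^(s-1))⁻¹ * (((Real.exp (-(c*t)) : ℝ):ℂ) * ((c*t : ℝ):ℂ)^(s-1)))
        (Ioi 0) := h2.const_mul (((c:ℝ):ℂ)^(s-1))⁻¹
    refine IntegrableOn.congr_fun h3 (fun t ht => ?_) measurableSet_Ioi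
    rw [mem_Ioi] at ht
    have : ((c*t : ℝ):ℂ) = ((c:ℝ):ℂ) * ((t:ℝ):ℂ) := by push_cast; ring
    rw [this, Complex.mul_cpow_ofReal_nonneg hc.le ht.le]
    field_simp
  -- norm of F
  have hnorm : ∀ (c t : ℝ), 0 < t →
      ‖((Real.exp (-(c*t)):ℝ):ℂ) * (t:ℂ)^(s-1)‖ = t^(s.re-1) * Real.exp (-(c*t)) := by
    intro c t ht
    rw [norm_mul, Complex.norm_real, Real.norm_eq_abs, abs_of_pos (Real.exp_pos _),
      Complex.norm_cpow_eq_rpow_re_of_pos ht]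
    have : (s-1).re = s.re - 1 := by simp
    rw [this]
    ring
  -- measurability of uncurry F
  have hmeas : AEStronglyMeasurable (Function.uncurry F)
      ((volume.restrict (Ioo 0 π)).prod (volume.restrict (Ioi 0))) := by
    rw [Measure.prod_restrict]
    refine ContinuousOn.aestronglyMeasurable ?_ (measurableSet_Ioo.prod measurableSet_Ioi)
    apply continuousOn_of_forall_continuousAt
    rintro ⟨θ, t⟩ hp
    have ht : (0:ℝ) < t := hp.2
    apply ContinuousAt.mul
    · have : Continuous fun p : ℝ × ℝ =>
          ((Real.exp (-((2 - 2*Real.cos p.1) * p.2)) : ℝ) : ℂ) := by fun_prop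
      exact this.continuousAt
    · exact (Complex.continuousAt_ofReal_cpow_const t (s-1) (Or.inr ht.ne')).comp_of_eq
        continuousAt_snd rfl
  -- integrability of uncurry F
  have hintF : Integrable (Function.uncurry F)
      ((volume.restrict (Ioo 0 π)).prod (volume.restrict (Ioi 0))) := by
    refine (MeasureTheory.integrable_prod_iff hmeas).mpr ⟨?_, ?_⟩
    · filter_upwards [ae_restrict_mem measurableSet_Ioo] with θ hθ
      exact hInt_t (2 - 2*Real.cos θ) (hcpos θ hθ)
    · set G : ℝ → ℝ := fun θ => (1/(2-2*Real.cos θ))^s.re * Real.Gamma s.re with hG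
      have hGeq : ∀ θ ∈ Ioo (0:ℝ) π, G θ = ∫ t in Ioi (0:ℝ), ‖F θ t‖ := by
        intro θ hθ
        have hc := hcpos θ hθ
        rw [MeasureTheory.setIntegral_congr_fun measurableSet_Ioi
          (fun t ht => hnorm (2-2*Real.cos θ) t ht),
          Real.integral_rpow_mul_exp_neg_mul_Ioi h0 hc, hG]
      have hGpos : ∀ θ ∈ Ioo (0:ℝ) π, 0 ≤ G θ := by
        intro θ hθ
        have := Real.Gamma_pos_of_pos h0
        have hc := hcpos θ hθ
        positivity
      -- majorant
      have hbound : ∀ θ ∈ Ioo (0:ℝ) π,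
          G θ ≤ Real.Gamma s.re * (((π/2)^2)^s.re * θ^(-(2*s.re))) := by
        intro θ hθ
        have hc := hcpos θ hθ
        have hθ0 := hθ.1
        have hsin : θ/π ≤ Real.sin (θ/2) := by
          have := Real.mul_le_sin (x := θ/2) (by linarith) (by linarith [hθ.2])
          calc θ/π = 2/π * (θ/2) := by ring
            _ ≤ Real.sin (θ/2) := this
        have hcb : (2*θ/π)^2 ≤ 2 - 2*Real.cos θ := by
          have h := Real.sin_sq_eq_half_sub (θ/2)
          rw [show 2*(θ/2) = θ by ring] at h
          have h2 : (θ/π)^2 ≤ Real.sin (θ/2)^2 := by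
            have h3 : 0 ≤ θ/π := by positivity
            nlinarith
          have h4 : (2*θ/π)^2 = 4*(θ/π)^2 := by ring
          linarith
        have hinv : 1/(2-2*Real.cos θ) ≤ (π/2)^2 * (θ^2)⁻¹ := by
          rw [div_le_iff₀ hc]
          have h4 : 0 < (2*θ/π)^2 := by positivity
          have h5 : (π/2)^2 * (θ^2)⁻¹ * (2*θ/π)^2 = 1 := by
            field_simp
          calc (1:ℝ) = (π/2)^2 * (θ^2)⁻¹ * (2*θ/π)^2 := h5.symm
            _ ≤ (π/2)^2 * (θ^2)⁻¹ * (2-2*Real.cos θ) := by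
                have h6 : 0 ≤ (π/2)^2 * (θ^2)⁻¹ := by positivity
                exact mul_le_mul_of_nonneg_left hcb h6
        have hrpow : (1/(2-2*Real.cos θ))^s.re ≤ ((π/2)^2 * (θ^2)⁻¹)^s.re :=
          Real.rpow_le_rpow (by positivity) hinv h0.le
        have hsplit : ((π/2)^2 * (θ^2)⁻¹)^s.re = ((π/2)^2)^s.re * θ^(-(2*s.re)) := by
          rw [Real.mul_rpow (by positivity) (by positivity)]
          congr 1
          rw [← Real.rpow_natCast θ 2, ← Real.rpow_neg hθ0.le, ← Real.rpow_mul hθ0.le]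
          norm_num
        rw [hG]
        have hΓ := Real.Gamma_pos_of_pos h0
        calc (1/(2-2*Real.cos θ))^s.re * Real.Gamma s.re
            ≤ ((π/2)^2 * (θ^2)⁻¹)^s.re * Real.Gamma s.re :=
              mul_le_mul_of_nonneg_right hrpow hΓ.le
          _ = Real.Gamma s.re * (((π/2)^2)^s.re * θ^(-(2*s.re))) := by rw [hsplit]; ring
      have hMaj : IntegrableOn
          (fun θ : ℝ => Real.Gamma s.re * (((π/2)^2)^s.re * θ^(-(2*s.re)))) (Ioo 0 π) := by
        have h7 : IntervalIntegrable (fun θ : ℝ => θ^(-(2*s.re))) volume 0 π :=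
          intervalIntegral.intervalIntegrable_rpow' (by linarith)
        have h8 : IntegrableOn (fun θ : ℝ => θ^(-(2*s.re))) (Ioo 0 π) :=
          ((intervalIntegrable_iff_integrableOn_Ioc_of_le hπ.le).mp h7).mono_set
            Ioo_subset_Ioc_self
        exact (h8.const_mul _).const_mul _
      have hGint : IntegrableOn G (Ioo 0 π) := by
        refine Integrable.mono' hMaj ?_ ?_
        · apply Measurable.aestronglyMeasurable
          rw [hG]
          measurability
        · filter_upwards [ae_restrict_mem measurableSet_Ioo] with θ hθ
          rw [Real.norm_eq_abs, _root_.abs_of_nonneg (hGpos θ hθ)]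
          exact hbound θ hθ
      refine hGint.congr ?_
      filter_upwards [ae_restrict_mem measurableSet_Ioo] with θ hθ
      exact hGeq θ hθ
  -- inner integral evaluation
  have hinner : ∀ θ ∈ Ioo (0:ℝ) π,
      (∫ t in Ioi (0:ℝ), F θ t) = ((2 - 2*Real.cos θ : ℝ) : ℂ)^(-s) * Complex.Gamma s := by
    intro θ hθ
    have hc := hcpos θ hθ
    have heval := integral_cpow_mul_exp_neg_mul_Ioi h0 hc
    have hcongr : (∫ t in Ioi (0:ℝ), F θ t)
        = ∫ t in Ioi (0:ℝ), (t:ℂ)^(s-1) * Complex.exp (-(((2-2*Real.cos θ) : ℝ) * (t:ℝ) : ℂ)) := by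
      refine MeasureTheory.setIntegral_congr_fun measurableSet_Ioi (fun t ht => ?_)
      rw [hF]
      simp only
      rw [Complex.ofReal_exp]
      push_cast
      ring
    rw [hcongr]
    rw [show (∫ t in Ioi (0:ℝ), (t:ℂ)^(s-1) * Complex.exp (-(((2-2*Real.cos θ) : ℝ) * (t:ℝ) : ℂ)))
        = ∫ t in Ioi (0:ℝ), (t:ℂ)^(s-1) * Complex.exp (-((((2-2*Real.cos θ) : ℝ) : ℂ) * (t:ℂ)))
        by push_cast; rfl]
    rw [heval]
    congr 1
    rw [one_div, Complex.inv_cpow, ← Complex.cpow_neg]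
    rw [Complex.arg_ofReal_of_nonneg hc.le]
    exact Real.pi_ne_zero.symm
  -- main computation
  have step1 : ∀ t ∈ Ioi (0:ℝ),
      (Real.exp (-2 * t) * besselI0 (2 * t) : ℂ) * (t : ℂ) ^ (s - 1)
        = (1/(π:ℂ)) * ∫ θ in Ioo (0:ℝ) π, F θ t := by
    intro t _
    have hreal : Real.exp (-2*t) * besselI0 (2*t)
        = (1/π) * ∫ θ in Ioo (0:ℝ) π, Real.exp (-((2 - 2*Real.cos θ) * t)) := by
      rw [besselI0_eq_integral (2*t), intervalIntegral.integral_of_le hπ.le,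
        MeasureTheory.integral_Ioc_eq_integral_Ioo, ← mul_assoc, mul_comm (Real.exp (-2*t)) (1/π),
        mul_assoc, ← MeasureTheory.integral_const_mul]
      congr 1
      refine MeasureTheory.setIntegral_congr_fun measurableSet_Ioo (fun θ _ => ?_)
      rw [← Real.exp_add]
      congr 1
      ring
    calc (Real.exp (-2 * t) * besselI0 (2 * t) : ℂ) * (t : ℂ) ^ (s - 1)
        = ((1/π : ℝ) : ℂ) * (((∫ θ in Ioo (0:ℝ) π, Real.exp (-((2 - 2*Real.cos θ) * t)) : ℝ) : ℂ)
            * (t : ℂ) ^ (s - 1)) := by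
          rw [← Complex.ofReal_mul] at *
          rw [hreal]
          push_cast
          ring
      _ = (1/(π:ℂ)) * ∫ θ in Ioo (0:ℝ) π, F θ t := by
          have hcast : ((∫ θ in Ioo (0:ℝ) π, Real.exp (-((2 - 2*Real.cos θ) * t)) : ℝ) : ℂ)
              = ∫ θ in Ioo (0:ℝ) π, ((Real.exp (-((2 - 2*Real.cos θ) * t)) : ℝ) : ℂ) :=
            (integral_ofReal (𝕜 := ℂ)).symm
          rw [hcast, ← MeasureTheory.integral_mul_const, Complex.ofReal_div, Complex.ofReal_one]
  have hswap := MeasureTheory.integral_integral_swap (f := F) hintF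
  calc (1 / Complex.Gamma s) * ∫ t in Ioi (0:ℝ),
          (Real.exp (-2 * t) * besselI0 (2 * t) : ℂ) * (t : ℂ) ^ (s - 1)
      = (1 / Complex.Gamma s) * ∫ t in Ioi (0:ℝ), (1/(π:ℂ)) * ∫ θ in Ioo (0:ℝ) π, F θ t := by
        rw [MeasureTheory.setIntegral_congr_fun measurableSet_Ioi step1]
    _ = (1 / Complex.Gamma s) * ((1/(π:ℂ)) * ∫ θ in Ioo (0:ℝ) π, ∫ t in Ioi (0:ℝ), F θ t) := by
        rw [MeasureTheory.integral_const_mul, hswap]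
    _ = (1 / Complex.Gamma s) * ((1/(π:ℂ)) *
          (Complex.Gamma s * ∫ θ in Ioo (0:ℝ) π, ((2 - 2*Real.cos θ : ℝ) : ℂ)^(-s))) := by
        congr 2
        rw [MeasureTheory.setIntegral_congr_fun measurableSet_Ioo hinner,
          ← MeasureTheory.integral_const_mul]
        refine MeasureTheory.setIntegral_congr_fun measurableSet_Ioo (fun θ _ => ?_)
        ring
    _ = (1 / Complex.Gamma s) * ((1/(π:ℂ)) *
          (Complex.Gamma s * ((4:ℂ)^(-s) * Complex.betaIntegral (1/2 - s) (1/2)))) := by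
        rw [subst_lemma]
    _ = (4 : ℂ) ^ (-s) * ((Real.sqrt Real.pi : ℂ))⁻¹ *
        Complex.Gamma (1 / 2 - s) / Complex.Gamma (1 - s) := by
        have hbeta : Complex.betaIntegral (1/2 - s) (1/2)
            = Complex.Gamma (1/2 - s) * ((Real.sqrt π : ℝ) : ℂ) / Complex.Gamma (1 - s) := by
          have hre1 : 0 < ((1:ℂ)/2 - s).re := by
            simp only [Complex.sub_re, Complex.div_re]
            norm_num
            linarith
          have hre2 : 0 < ((1:ℂ)/2).re := by norm_num
          have h := Complex.Gamma_mul_Gamma_eq_betaIntegral hre1 hre2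
          rw [show (1:ℂ)/2 - s + 1/2 = 1 - s by ring] at h
          have hΓ1s : Complex.Gamma (1 - s) ≠ 0 := by
            apply Complex.Gamma_ne_zero_of_re_pos
            simp only [Complex.sub_re, Complex.one_re]
            linarith
          have hhalf : Complex.Gamma (1/2) = ((Real.sqrt π : ℝ) : ℂ) := by
            rw [Complex.Gamma_one_half_eq, Real.sqrt_eq_rpow,
              Complex.ofReal_cpow hπ.le]
            norm_num
          rw [hhalf] at h
          rw [eq_div_iff hΓ1s]
          linear_combination -h
        rw [hbeta]
        have hΓs : Complex.Gamma s ≠ 0 := Complex.Gamma_ne_zero_of_re_pos h0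
        have hΓ1s : Complex.Gamma (1 - s) ≠ 0 := by
          apply Complex.Gamma_ne_zero_of_re_pos
          simp only [Complex.sub_re, Complex.one_re]
          linarith
        have hsqne : ((Real.sqrt π : ℝ) : ℂ) ≠ 0 :=
          Complex.ofReal_ne_zero.mpr (Real.sqrt_pos.mpr hπ).ne'
        have hπne : ((π : ℝ) : ℂ) ≠ 0 := Complex.ofReal_ne_zero.mpr hπ.ne'
        have hsq : ((Real.sqrt π : ℝ) : ℂ) * ((Real.sqrt π : ℝ) : ℂ) = ((π:ℝ):ℂ) := by
          rw [← Complex.ofReal_mul, Real.mul_self_sqrt hπ.le]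
        field_simp
        ring_nf
        linear_combination Complex.Gamma (1/2 - s) * hsq
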